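/- Let m ≥ 2 and define z_n^(m) by z_0=0, z_1=1, z_2=020 (for m=2, z_2=00), z_n = (n−3 mod m)^{-1} h_{n-3}^R h_{n-2}^R h_{n-m}^R h_{n-m+1}^R ⋯ h_{n-3}^R (n−2 mod m) for n ≥ m (and an analogous formula for 3 ≤ n ≤ m−1). Then for all n ≥ m+1, |z_n| = |z_{n-1}| + |z_{n-2}| + ⋯ + |z_{n-m}|. -/

import Mathlib

/-- The `m`-bonacci morphism on letters: `i ↦ 0(i+1)` for `i ≤ m-2`, `(m-1) ↦ 0`. -/
def phi (m a : ℕ) : List ℕ := if a = m - 1 then [0] else [0, a + 1]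

/-- The `m`-bonacci morphism on words. -/
def phiW (m : ℕ) (w : List ℕ) : List ℕ := w.flatMap (phi m)

/-- The finite `m`-bonacci words `h_n = φ_m^n(0)`. -/
def hb (m : ℕ) : ℕ → List ℕ
  | 0 => [0]
  | n+1 => phiW m (hb m n)

/-- The palindromic prefixes of the `m`-bonacci word, shifted:
`ub m n` is the paper's `u_{n+1}` (so `ub m 0 = u₁ = ε`, and `u_{n+2} = h_n u_{n+1}`). -/
def ub (m : ℕ) : ℕ → List ℕ
  | 0 => []
  | n+1 => hb m n ++ ub m n

/-- Number of occurrences of `x` as a factor of `w` (counted by starting position). -/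
def occ (x w : List ℕ) : ℕ :=
  ((List.range (w.length + 1)).filter (fun i => x.isPrefixOf (w.drop i))).length

/-- A word is closed if it is a single letter or has a border (a proper factor that
is both a prefix and a suffix) occurring exactly twice in it. -/
def ClosedWord (w : List ℕ) : Prop :=
  w.length = 1 ∨
    ∃ x : List ℕ, x ≠ [] ∧ x.length < w.length ∧ x <+: w ∧ x <:+ w ∧ occ x w = 2

lemma phiW_nil (m : ℕ) : phiW m [] = [] := rfl
lemma phiW_cons (m a : ℕ) (w : List ℕ) : phiW m (a :: w) = phi m a ++ phiW m w := rfl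

lemma phiW_len (m : ℕ) (w : List ℕ) :
    (phiW m w).length + w.count (m - 1) = 2 * w.length := by
  induction w with
  | nil => rfl
  | cons a w ih =>
    rw [phiW_cons, List.length_append, List.count_cons, List.length_cons, phi]
    by_cases h : a = m - 1 <;> simp [h] <;> omega

lemma count0_phiW (m : ℕ) (w : List ℕ) : (phiW m w).count 0 = w.length := by
  induction w with
  | nil => rfl
  | cons a w ih =>
    rw [phiW_cons, List.count_append, ih, phi]
    by_cases h : a = m - 1 <;> simp [h] <;> omega

lemma count_succ_phiW (m c : ℕ) (hc : c ≠ m - 1) (w : List ℕ) :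
    (phiW m w).count (c + 1) = w.count c := by
  induction w with
  | nil => rfl
  | cons a w ih =>
    rw [phiW_cons, List.count_append, ih, List.count_cons]
    simp only [beq_iff_eq]
    have key : (phi m a).count (c + 1) = if a = c then 1 else 0 := by
      rcases eq_or_ne a c with rfl | hne
      · rw [if_pos rfl, phi, if_neg hc]
        simp [List.count_cons]
      · rw [if_neg hne, phi]
        split_ifs with h
        · simp [List.count_cons]
        · simp [List.count_cons]
          omega
    omega

lemma hb_pos (m k : ℕ) : 0 < (hb m k).length := by
  induction k with
  | zero => simp [hb]
  | succ k ih =>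
    have h1 := phiW_len m (hb m k)
    have h2 := List.count_le_length (a := m - 1) (l := hb m k)
    show 0 < (phiW m (hb m k)).length
    omega

lemma hb_mem_le (m k : ℕ) : ∀ a ∈ hb m k, a ≤ k := by
  induction k with
  | zero => simp [hb]
  | succ k ih =>
    intro a ha
    have : a ∈ (hb m k).flatMap (phi m) := ha
    rw [List.mem_flatMap] at this
    obtain ⟨b, hb', hab⟩ := this
    have := ih b hb'
    rw [phi] at hab
    by_cases h : b = m - 1 <;> simp [h] at hab <;> omega

lemma count_hb_zero (m k j : ℕ) (h : k < j) : (hb m k).count j = 0 := by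
  rw [List.count_eq_zero]
  intro hmem
  exact absurd (hb_mem_le m k j hmem) (by omega)

lemma count_shift (m : ℕ) : ∀ j, j < m → ∀ k, (hb m (k + j)).count j = (hb m k).count 0 := by
  intro j
  induction j with
  | zero => intro _ k; rfl
  | succ j ih =>
    intro hj k
    have h1 : (hb m (k + (j+1))).count (j+1) = (hb m (k + j)).count j := by
      show (phiW m (hb m (k+j))).count (j+1) = _
      exact count_succ_phiW m j (by omega) _
    rw [h1, ih (by omega) k]

lemma count0_hb (m t : ℕ) : (hb m t).count 0 = (hb m (t - 1)).length := by
  cases t with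
  | zero => rfl
  | succ t => exact count0_phiW m (hb m t)

def Eb (m k : ℕ) : ℕ := if m - 1 ≤ k then (hb m (k - m)).length else 0

lemma HE (m : ℕ) (hm : 2 ≤ m) (k : ℕ) :
    (hb m (k + 1)).length + Eb m k = 2 * (hb m k).length := by
  have h1 := phiW_len m (hb m k)
  have hphi : (hb m (k+1)).length = (phiW m (hb m k)).length := rfl
  rw [Eb]
  by_cases h : m - 1 ≤ k
  · rw [if_pos h]
    have hk : k = (k - (m - 1)) + (m - 1) := by omega
    have h2 := count_shift m (m-1) (by omega) (k - (m-1))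
    rw [← hk, count0_hb] at h2
    have h3 : k - (m - 1) - 1 = k - m := by omega
    rw [h3] at h2
    omega
  · rw [if_neg h]
    have h2 : (hb m k).count (m - 1) = 0 := count_hb_zero m k (m-1) (by omega)
    omega

lemma H_pow (m : ℕ) (hm : 2 ≤ m) : ∀ k, k < m → (hb m k).length = 2 ^ k := by
  intro k
  induction k with
  | zero => intro _; simp [hb]
  | succ k ih =>
    intro hk
    have h1 := HE m hm k
    have h2 : Eb m k = 0 := by rw [Eb, if_neg (by omega)]
    rw [ih (by omega)] at h1
    have : (2:ℕ) ^ (k+1) = 2 * 2 ^ k := by ring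
    omega


/-- The words `z_n` of the closed `z`-factorization of the `m`-bonacci word:
`z₀ = 0`, `z₁ = 1`, `z₂ = 020` (`00` when `m = 2`),
`z_n = (n-3 mod m)⁻¹ h_{n-3}^R h_{n-2}^R (n) h₀^R ⋯ h_{n-3}^R (n-2)` for `3 ≤ n ≤ m-1`, and
`z_n = (n-3 mod m)⁻¹ h_{n-3}^R h_{n-2}^R h_{n-m}^R h_{n-m+1}^R ⋯ h_{n-3}^R (n-2 mod m)` for `n ≥ m`
(removing the first letter of `h_{n-3}^R`, which is `n-3 mod m` when `m ∤ n-3` and `0` otherwise). -/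
def zb (m : ℕ) : ℕ → List ℕ
  | 0 => [0]
  | 1 => [1]
  | 2 => if m = 2 then [0, 0] else [0, 2, 0]
  | n+3 =>
    if m ≤ n + 3 then
      ((hb m n).reverse).tail ++ (hb m (n + 1)).reverse ++
        (((List.range (m - 2)).map (fun j => (hb m (n + 3 - m + j)).reverse)).flatten) ++
        [(n + 1) % m]
    else
      ((hb m n).reverse).tail ++ (hb m (n + 1)).reverse ++ [n + 3] ++
        (((List.range (n + 1)).map (fun j => (hb m j).reverse)).flatten) ++ [n + 1]

lemma join_len (f : ℕ → List ℕ) : ∀ k,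
    (((List.range k).map f).flatten).length = ∑ j ∈ Finset.range k, (f j).length := by
  intro k
  induction k with
  | zero => simp
  | succ k ih =>
    rw [List.range_succ]
    simp only [List.map_append, List.flatten_append, List.length_append, ih,
      Finset.sum_range_succ]
    simp

lemma ZF1 (m t : ℕ) (h : m ≤ t + 3) :
    (zb m (t + 3)).length = (hb m t).length + (hb m (t + 1)).length +
      ∑ j ∈ Finset.range (m - 2), (hb m (t + 3 - m + j)).length := by
  have hs : (((List.range (m-2)).map (fun j => (hb m (t + 3 - m + j)).reverse)).flatten).length
      = ∑ j ∈ Finset.range (m - 2), (hb m (t + 3 - m + j)).length := by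
    rw [join_len]
    exact Finset.sum_congr rfl (fun j _ => by simp)
  have hp := hb_pos m t
  rw [zb, if_pos h]
  simp only [List.length_append, List.length_tail, List.length_reverse, List.length_singleton, hs]
  omega

lemma ZF2 (m t : ℕ) (h : t + 3 < m) :
    (zb m (t + 3)).length = (hb m t).length + (hb m (t + 1)).length +
      (∑ j ∈ Finset.range (t + 1), (hb m j).length) + 1 := by
  have hs : (((List.range (t+1)).map (fun j => (hb m j).reverse)).flatten).length
      = ∑ j ∈ Finset.range (t + 1), (hb m j).length := by
    rw [join_len]
    exact Finset.sum_congr rfl (fun j _ => by simp)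
  have hp := hb_pos m t
  rw [zb, if_neg (by omega)]
  simp only [List.length_append, List.length_tail, List.length_reverse, List.length_singleton, hs]
  omega

lemma pow2sum : ∀ n : ℕ, (∑ j ∈ Finset.range n, 2 ^ j) + 1 = 2 ^ n := by
  intro n
  induction n with
  | zero => simp
  | succ n ih =>
    rw [Finset.sum_range_succ, pow_succ]
    omega

lemma Hsum (m : ℕ) (hm : 2 ≤ m) (n : ℕ) (h : n < m) :
    (∑ j ∈ Finset.range n, (hb m j).length) + 1 = 2 ^ n := by
  rw [Finset.sum_congr rfl (fun j hj => H_pow m hm j (by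
    have := Finset.mem_range.mp hj; omega))]
  exact pow2sum n

lemma Zsmall (m : ℕ) (hm : 2 ≤ m) (k : ℕ) (h : k + 3 < m) :
    (zb m (k + 3)).length = 2 ^ k + 2 ^ (k + 2) := by
  rw [ZF2 m k h, H_pow m hm k (by omega), H_pow m hm (k+1) (by omega)]
  have h1 := Hsum m hm (k+1) (by omega)
  have e1 : (2:ℕ) ^ (k+1) = 2 * 2 ^ k := by ring
  have e2 : (2:ℕ) ^ (k+2) = 4 * 2 ^ k := by ring
  omega

lemma Eb_ge (m k : ℕ) (h : m - 1 ≤ k) : Eb m k = (hb m (k - m)).length := if_pos h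

lemma Eb_lt (m k : ℕ) (h : k < m - 1) : Eb m k = 0 := if_neg (by omega)

lemma Esum (m : ℕ) (hm : 2 ≤ m) (r : ℕ) (h2 : 2 ≤ r) (h : r ≤ m - 1) :
    ∑ j ∈ Finset.range (m - 2), Eb m (r + j) =
      (∑ i ∈ Finset.range (r - 2), (hb m i).length) + 1 := by
  rw [Finset.range_eq_Ico, ← Finset.sum_Ico_consecutive (fun j => Eb m (r + j))
    (Nat.zero_le (m - 1 - r)) (by omega : m - 1 - r ≤ m - 2)]
  have hz : ∑ j ∈ Finset.Ico 0 (m - 1 - r), Eb m (r + j) = 0 := by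
    apply Finset.sum_eq_zero
    intro j hj
    rw [Finset.mem_Ico] at hj
    exact Eb_lt m (r + j) (by omega)
  rw [hz, zero_add, Finset.sum_Ico_eq_sum_range]
  have hne : (m - 2) - (m - 1 - r) = r - 1 := by omega
  rw [hne]
  have hcongr : ∀ i ∈ Finset.range (r - 1),
      Eb m (r + (m - 1 - r + i)) = (hb m (i - 1)).length := by
    intro i hi
    have e1 : r + (m - 1 - r + i) = m - 1 + i := by omega
    rw [e1, Eb_ge m _ (by omega), show m - 1 + i - m = i - 1 from by omega]
  rw [Finset.sum_congr rfl hcongr]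
  have hr1 : r - 1 = (r - 2) + 1 := by omega
  rw [hr1, Finset.sum_range_succ']
  have : ∀ i ∈ Finset.range (r - 2), (hb m (i + 1 - 1)).length = (hb m i).length := by
    intro i _
    rw [show i + 1 - 1 = i from by omega]
  rw [Finset.sum_congr rfl this]
  simp [hb]

lemma Esum_big (m r : ℕ) (h : m ≤ r) :
    ∑ j ∈ Finset.range (m - 2), Eb m (r + j) =
      ∑ j ∈ Finset.range (m - 2), (hb m (r - m + j)).length := by
  apply Finset.sum_congr rfl
  intro j _
  rw [Eb_ge m (r + j) (by omega), show r + j - m = r - m + j from by omega]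

lemma star (m : ℕ) (hm : 2 ≤ m) (r : ℕ) (hr : 1 ≤ r) :
    (zb m r).length = Eb m (m + r - 3) + Eb m (m + r - 2) +
      ∑ j ∈ Finset.range (m - 2), Eb m (r + j) := by
  by_cases h1 : r = 1
  · subst h1
    have e1 : Eb m (m + 1 - 3) = 0 := Eb_lt m _ (by omega)
    have e2 : Eb m (m + 1 - 2) = (hb m (m + 1 - 2 - m)).length := Eb_ge m _ (by omega)
    have e2' : m + 1 - 2 - m = 0 := by omega
    have e3 : ∑ j ∈ Finset.range (m - 2), Eb m (1 + j) = 0 := by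
      apply Finset.sum_eq_zero
      intro j hj
      rw [Finset.mem_range] at hj
      exact Eb_lt m (1 + j) (by omega)
    rw [e1, e2, e2', e3]
    simp [zb, hb]
  by_cases h2 : r = 2
  · subst h2
    have e1 : Eb m (m + 2 - 3) = (hb m (m + 2 - 3 - m)).length := Eb_ge m _ (by omega)
    have e1' : m + 2 - 3 - m = 0 := by omega
    have e2 : Eb m (m + 2 - 2) = (hb m (m + 2 - 2 - m)).length := Eb_ge m _ (by omega)
    have e2' : m + 2 - 2 - m = 0 := by omega
    rw [e1, e1', e2, e2']
    by_cases hm2 : m = 2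
    · subst hm2
      simp [zb, hb]
    · rw [Esum m hm 2 (le_refl 2) (by omega)]
      simp [zb, hb, hm2]
  -- now r ≥ 3
  have hr3 : 3 ≤ r := by omega
  have e1 : Eb m (m + r - 3) = (hb m (r - 3)).length := by
    rw [Eb_ge m _ (by omega), show m + r - 3 - m = r - 3 from by omega]
  have e2 : Eb m (m + r - 2) = (hb m (r - 2)).length := by
    rw [Eb_ge m _ (by omega), show m + r - 2 - m = r - 2 from by omega]
  have hrw : r = (r - 3) + 3 := by omega
  by_cases hbig : m ≤ r
  · have z := ZF1 m (r - 3) (by omega)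
    rw [← hrw, show r - 3 + 1 = r - 2 from by omega] at z
    rw [e1, e2, Esum_big m r hbig, z]
  · have z := ZF2 m (r - 3) (by omega)
    rw [← hrw, show r - 3 + 1 = r - 2 from by omega] at z
    rw [e1, e2, Esum m hm r (by omega) (by omega), z]
    omega

lemma doubling (m : ℕ) (hm : 2 ≤ m) (r : ℕ) (hr : 1 ≤ r) :
    (zb m (m + r + 1)).length + (zb m r).length = 2 * (zb m (m + r)).length := by
  have hA : m + r + 1 = (m + r - 2) + 3 := by omega
  have hB : m + r = (m + r - 3) + 3 := by omega
  have zA := ZF1 m (m + r - 2) (by omega)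
  have zB := ZF1 m (m + r - 3) (by omega)
  rw [← hA] at zA
  rw [← hB] at zB
  have eA1 : m + r - 2 + 1 = m + r - 1 := by omega
  have eA2 : m + r + 1 - m = r + 1 := by omega
  rw [eA1, eA2] at zA
  have eB1 : m + r - 3 + 1 = m + r - 2 := by omega
  have eB2 : m + r - m = r := by omega
  rw [eB1, eB2] at zB
  have he1 := HE m hm (m + r - 3)
  rw [eB1] at he1
  have he2 := HE m hm (m + r - 2)
  rw [eA1] at he2
  have hsum : (∑ j ∈ Finset.range (m - 2), (hb m (r + 1 + j)).length) +
      (∑ j ∈ Finset.range (m - 2), Eb m (r + j)) =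
      2 * ∑ j ∈ Finset.range (m - 2), (hb m (r + j)).length := by
    rw [← Finset.sum_add_distrib, Finset.mul_sum]
    apply Finset.sum_congr rfl
    intro j _
    have := HE m hm (r + j)
    have e : r + j + 1 = r + 1 + j := by omega
    rw [e] at this
    exact this
  have hst := star m hm r hr
  omega

lemma base2 : (zb 2 3).length = ∑ j ∈ Finset.range 2, (zb 2 (2 - j)).length := by
  decide

lemma base (m : ℕ) (hm : 2 ≤ m) :
    (zb m (m + 1)).length = ∑ j ∈ Finset.range m, (zb m (m - j)).length := by
  by_cases hm2 : m = 2
  · subst hm2; decide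
  have hm3 : 3 ≤ m := by omega
  -- LHS
  have zL := ZF1 m (m - 2) (by omega)
  rw [show m - 2 + 3 = m + 1 from by omega, show m - 2 + 1 = m - 1 from by omega,
      show m + 1 - m = 1 from by omega] at zL
  have hL2 : (hb m (m - 2)).length = 2 ^ (m - 2) := H_pow m hm _ (by omega)
  have hL1 : (hb m (m - 1)).length = 2 ^ (m - 1) := H_pow m hm _ (by omega)
  have sL : ∑ j ∈ Finset.range (m - 2), (hb m (1 + j)).length =
      (∑ j ∈ Finset.range (m - 2), 2 ^ j) * 2 := by
    rw [Finset.sum_mul]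
    apply Finset.sum_congr rfl
    intro j hj
    rw [Finset.mem_range] at hj
    rw [H_pow m hm (1 + j) (by omega), show 1 + j = j + 1 from by omega, pow_succ]
  rw [hL2, hL1, sL] at zL
  -- RHS
  have refl1 : ∑ j ∈ Finset.range m, (zb m (m - j)).length =
      ∑ j ∈ Finset.range m, (zb m (m - 1 - j + 1)).length := by
    apply Finset.sum_congr rfl
    intro j hj
    rw [Finset.mem_range] at hj
    rw [show m - j = m - 1 - j + 1 from by omega]
  rw [refl1, Finset.sum_range_reflect (fun k => (zb m (k + 1)).length) m]
  have s1 := Finset.sum_range_succ' (fun k => (zb m (k + 1)).length) (m - 1)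
  rw [show m - 1 + 1 = m from by omega] at s1
  have s2 := Finset.sum_range_succ' (fun k => (zb m (k + 1 + 1)).length) (m - 2)
  rw [show m - 2 + 1 = m - 1 from by omega] at s2
  rw [s1, s2]
  have g0 : (zb m (0 + 1)).length = 1 := by simp [zb]
  have g1 : (zb m (0 + 1 + 1)).length = 3 := by simp [zb, hm2]
  have hc3 : ∀ k ∈ Finset.range (m - 2), (zb m (k + 1 + 1 + 1)).length = (zb m (k + 3)).length := by
    intro k _
    rw [show k + 1 + 1 + 1 = k + 3 from by omega]
  rw [Finset.sum_congr rfl hc3, g0, g1]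
  have s3 := Finset.sum_range_succ (fun k => (zb m (k + 3)).length) (m - 3)
  rw [show m - 3 + 1 = m - 2 from by omega] at s3
  rw [s3, show m - 3 + 3 = m from by omega]
  have zM := ZF1 m (m - 3) (by omega)
  rw [show m - 3 + 3 = m from by omega, show m - 3 + 1 = m - 2 from by omega,
      show m - m = 0 from by omega] at zM
  have hM3 : (hb m (m - 3)).length = 2 ^ (m - 3) := H_pow m hm _ (by omega)
  have sM : ∑ j ∈ Finset.range (m - 2), (hb m (0 + j)).length =
      ∑ j ∈ Finset.range (m - 2), (hb m j).length := by
    apply Finset.sum_congr rfl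
    intro j _
    rw [zero_add]
  have hMs := Hsum m hm (m - 2) (by omega)
  rw [hM3, hL2, sM] at zM
  have ssmall : ∑ k ∈ Finset.range (m - 3), (zb m (k + 3)).length =
      (∑ k ∈ Finset.range (m - 3), 2 ^ k) + (∑ k ∈ Finset.range (m - 3), 2 ^ k) * 4 := by
    rw [Finset.sum_mul, ← Finset.sum_add_distrib]
    apply Finset.sum_congr rfl
    intro k hk
    rw [Finset.mem_range] at hk
    rw [Zsmall m hm k (by omega), show (2:ℕ) ^ (k + 2) = 2 ^ k * 4 from by ring]
  rw [ssmall]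
  have p1 := pow2sum (m - 3)
  have p2 := pow2sum (m - 2)
  have e1 : (2:ℕ) ^ (m - 2) = 2 ^ (m - 3) * 2 := by
    rw [← pow_succ, show m - 3 + 1 = m - 2 from by omega]
  have e2 : (2:ℕ) ^ (m - 1) = 2 ^ (m - 2) * 2 := by
    rw [← pow_succ, show m - 2 + 1 = m - 1 from by omega]
  omega


/-- for `m ≥ 2` and `n ≥ m + 1`,
`|z_n| = |z_{n-1}| + |z_{n-2}| + ⋯ + |z_{n-m}|`. -/
theorem zb_length_recursion :
    ∀ m : ℕ, 2 ≤ m → ∀ n : ℕ, m + 1 ≤ n →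
      (zb m n).length = ∑ j ∈ Finset.range m, (zb m (n - 1 - j)).length := by
  intro m hm n hn
  induction n, hn using Nat.le_induction with
  | base =>
    simp only [Nat.add_sub_cancel]
    exact base m hm
  | succ n hn ih =>
    simp only [Nat.add_sub_cancel]
    have hd := doubling m hm (n - m) (by omega)
    rw [show m + (n - m) = n from by omega] at hd
    have s1 := Finset.sum_range_succ' (fun j => (zb m (n - j)).length) (m - 1)
    rw [show m - 1 + 1 = m from by omega] at s1
    have s2 := Finset.sum_range_succ (fun j => (zb m (n - 1 - j)).length) (m - 1)
    rw [show m - 1 + 1 = m from by omega] at s2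
    have hc : ∀ j ∈ Finset.range (m - 1), (zb m (n - (j + 1))).length = (zb m (n - 1 - j)).length := by
      intro j _
      rw [show n - (j + 1) = n - 1 - j from by omega]
    rw [Finset.sum_congr rfl hc] at s1
    rw [show n - 0 = n from by omega] at s1
    rw [show n - 1 - (m - 1) = n - m from by omega] at s2
    omega
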